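/- Let 1 < K' < K, let π = (π_h)_{h ∈ H} be positive reals summing to 1 with π_0 the value at h = (0,...,0), and let π̃_h = π_h/(1-π_0) for h ∈ H*. Define marginal probabilities π_{g+} = ∑_{h ∈ H} π_h I((h_1,...,h_{K'}) = g) for g ∈ G = {0,1}^{K'}, the conditional marginals π̃_{g+} = ∑_{h ∈ H*} π̃_h I((h_1,...,h_{K'}) = g) for g ∈ G*, and π̃_{0+} = ∑_{h ∈ H*} π̃_h I((h_1,...,h_{K'}) = (0,...,0)). For any ξ > 0, the equality ∏_{g ∈ G} π_{g+}^{I_odd(g)} / ∏_{g ∈ G} π_{g+}^{I_even(g)} = ξ holds if and only if π_0 = (Π̃_{odd,+}/Π̃_{even,+} - ξ·π̃_{0+}) / (ξ + Π̃_{odd,+}/Π̃_{even,+} - ξ·π̃_{0+}), where Π̃_{odd,+} = ∏_{g ∈ G*} π̃_{g+}^{I_odd(g)} and Π̃_{even,+} = ∏_{g ∈ G*} π̃_{g+}^{I_even(g)}. -/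
import Mathlib


open Finset

/-- `H* = {0,1}^K \ {(0,...,0)}` as a finset. -/
def Hstar (K : ℕ) : Finset (Fin K → Bool) :=
  Finset.univ.filter (fun h => h ≠ (fun _ => false))

/-- `∏_{h ∈ s} p(h)^{I_odd(h)}`, where `I_odd(h) = I(∑_k h_k odd)`. -/
noncomputable def pOdd {K : ℕ} (s : Finset (Fin K → Bool)) (p : (Fin K → Bool) → ℝ) : ℝ :=
  ∏ h ∈ s, if Odd (∑ k, (h k).toNat) then p h else 1

/-- `∏_{h ∈ s} p(h)^{I_even(h)}`, where `I_even(h) = I(∑_k h_k even)`. -/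
noncomputable def pEven {K : ℕ} (s : Finset (Fin K → Bool)) (p : (Fin K → Bool) → ℝ) : ℝ :=
  ∏ h ∈ s, if Even (∑ k, (h k).toNat) then p h else 1

lemma flip_inv {n : ℕ} (hn : 0 < n) (g : Fin n → Bool) :
    Function.update (Function.update g ⟨0,hn⟩ (!(g ⟨0,hn⟩))) ⟨0,hn⟩
      (!(Function.update g ⟨0,hn⟩ (!(g ⟨0,hn⟩)) ⟨0,hn⟩)) = g := by
  simp [Function.update_self, Function.update_idem]

lemma flip_parity {n : ℕ} (hn : 0 < n) (g : Fin n → Bool) :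
    Odd (∑ k, ((Function.update g ⟨0,hn⟩ (!(g ⟨0,hn⟩))) k).toNat) ↔
      Even (∑ k, (g k).toNat) := by
  set i0 : Fin n := ⟨0, hn⟩
  rw [← Finset.add_sum_erase _ (fun k => ((Function.update g i0 (!(g i0))) k).toNat) (Finset.mem_univ i0),
      ← Finset.add_sum_erase _ (fun k => (g k).toNat) (Finset.mem_univ i0)]
  have he : ∑ k ∈ univ.erase i0, ((Function.update g i0 (!(g i0))) k).toNat
      = ∑ k ∈ univ.erase i0, (g k).toNat := by
    refine Finset.sum_congr rfl fun k hk => ?_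
    rw [Function.update_of_ne (Finset.ne_of_mem_erase hk)]
  rw [he, Function.update_self]
  cases hb : g i0 <;> simp [hb, Nat.odd_iff, Nat.even_iff, Nat.add_mod] <;> omega

lemma flip_parity' {n : ℕ} (hn : 0 < n) (g : Fin n → Bool) :
    Even (∑ k, ((Function.update g ⟨0,hn⟩ (!(g ⟨0,hn⟩))) k).toNat) ↔
      Odd (∑ k, (g k).toNat) := by
  have := flip_parity hn (Function.update g ⟨0,hn⟩ (!(g ⟨0,hn⟩)))
  rw [flip_inv hn g] at this
  exact this.symm

lemma card_odd_eq_card_even {n : ℕ} (hn : 0 < n) :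
    ((univ : Finset (Fin n → Bool)).filter (fun g => Odd (∑ k, (g k).toNat))).card
      = ((univ : Finset (Fin n → Bool)).filter (fun g => Even (∑ k, (g k).toNat))).card := by
  apply Finset.card_bij' (fun g _ => Function.update g ⟨0,hn⟩ (!(g ⟨0,hn⟩)))
    (fun g _ => Function.update g ⟨0,hn⟩ (!(g ⟨0,hn⟩)))
  · intro a _; exact flip_inv hn a
  · intro a _; exact flip_inv hn a
  · intro a ha
    simp only [mem_filter, mem_univ, true_and] at ha ⊢
    exact (flip_parity' hn a).mpr ha
  · intro a ha
    simp only [mem_filter, mem_univ, true_and] at ha ⊢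
    exact (flip_parity hn a).mpr ha

/-- for positive cell probabilities `π` on `H = {0,1}^K` summing to one,
`K'`-list marginal probabilities `π_{g+}` and conditional marginals `π̃_{g+}` (including
`π̃_{0+}`), and any `ξ > 0`: the `K'`-list marginal highest-order interaction equals `ξ`,
i.e. `∏_g π_{g+}^{I_odd(g)} / ∏_g π_{g+}^{I_even(g)} = ξ`, iff
`π_0 = (Π̃_{odd,+}/Π̃_{even,+} - ξ·π̃_{0+}) / (ξ + Π̃_{odd,+}/Π̃_{even,+} - ξ·π̃_{0+})`. -/
theorem stmt11 (K K' : ℕ) (hK : 3 ≤ K) (hK'1 : 1 < K') (hK'K : K' < K)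
    (π : (Fin K → Bool) → ℝ) (hπ : ∀ h, 0 < π h) (hs : ∑ h, π h = 1)
    (tπ : (Fin K → Bool) → ℝ)
    (htπ : ∀ h, tπ h = π h / (1 - π (fun _ => false)))
    (mfull : (Fin K' → Bool) → ℝ)
    (hmfull : ∀ g, mfull g = ∑ h : Fin K → Bool,
        if (fun i : Fin K' => h (Fin.castLE hK'K.le i)) = g then π h else 0)
    (tm : (Fin K' → Bool) → ℝ)
    (htm : ∀ g, tm g = ∑ h ∈ Hstar K,
        if (fun i : Fin K' => h (Fin.castLE hK'K.le i)) = g then tπ h else 0)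
    (ξ : ℝ) (hξ : 0 < ξ) :
    pOdd Finset.univ mfull / pEven Finset.univ mfull = ξ ↔
      π (fun _ => false) =
        (pOdd (Hstar K') tm / pEven (Hstar K') tm - ξ * tm (fun _ => false)) /
          (ξ + (pOdd (Hstar K') tm / pEven (Hstar K') tm - ξ * tm (fun _ => false))) := by
  have hK0 : 0 < K := by omega
  have hK'0 : 0 < K' := by omega
  set zK : Fin K → Bool := fun _ => false with hzK
  set zK' : Fin K' → Bool := fun _ => false with hzK'
  set P : (Fin K → Bool) → (Fin K' → Bool) := fun h i => h (Fin.castLE hK'K.le i) with hP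
  set p0 : ℝ := π zK with hp0def
  -- Hstar as erase
  have hHK : Hstar K = (univ : Finset (Fin K → Bool)).erase zK := Finset.filter_ne' _ _
  have hHK' : Hstar K' = (univ : Finset (Fin K' → Bool)).erase zK' := Finset.filter_ne' _ _
  -- p0 < 1
  have honez : (fun _ => true : Fin K → Bool) ≠ zK := by
    intro h; exact absurd (congrFun h ⟨0, hK0⟩) (by simp)
  have hsplitπ : p0 + ∑ h ∈ univ.erase zK, π h = 1 := by
    rw [Finset.add_sum_erase _ _ (Finset.mem_univ zK)]; exact hs
  have hpos_erase : 0 < ∑ h ∈ univ.erase zK, π h :=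
    Finset.sum_pos (fun h _ => hπ h) ⟨_, Finset.mem_erase.mpr ⟨honez, Finset.mem_univ _⟩⟩
  have hp0lt1 : p0 < 1 := by linarith
  have hc : (0:ℝ) < 1 - p0 := by linarith
  -- conditional marginal identity
  have hctm : ∀ g, (1 - p0) * tm g = ∑ h ∈ Hstar K, if P h = g then π h else 0 := by
    intro g
    rw [htm g, Finset.mul_sum]
    refine Finset.sum_congr rfl fun h _ => ?_
    rw [htπ h]
    split_ifs
    · exact mul_div_cancel₀ _ hc.ne'
    · ring
  -- full marginal split
  have hmsplit : ∀ g, mfull g = (if P zK = g then p0 else 0)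
      + ∑ h ∈ Hstar K, if P h = g then π h else 0 := by
    intro g
    rw [hmfull g, hHK, ← Finset.add_sum_erase _ _ (Finset.mem_univ zK)]
  have hPzK : P zK = zK' := rfl
  have key0 : mfull zK' = p0 + (1 - p0) * tm zK' := by
    rw [hmsplit, hctm, if_pos hPzK]
  have key1 : ∀ g, g ≠ zK' → mfull g = (1 - p0) * tm g := by
    intro g hg
    rw [hmsplit, hctm, if_neg (fun h => hg (hPzK.symm.trans h).symm), zero_add]
  -- positivity of tm
  have htmpos : ∀ g, 0 < tm g := by
    intro g
    have hS : 0 < ∑ h ∈ Hstar K, if P h = g then π h else 0 := by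
      refine Finset.sum_pos' (fun h _ => by split_ifs <;> [exact (hπ h).le; rfl]) ?_
      refine ⟨fun i : Fin K => if hi : (i : ℕ) < K' then g ⟨i, hi⟩ else true, ?_, ?_⟩
      · rw [hHK, Finset.mem_erase]
        refine ⟨fun hcon => ?_, Finset.mem_univ _⟩
        have := congrFun hcon ⟨K', hK'K⟩
        simp only [hzK] at this
        rw [dif_neg (by omega)] at this
        exact Bool.noConfusion this
      · rw [if_pos]
        · exact hπ _
        · funext i
          simp only [hP, Fin.coe_castLE]
          rw [dif_pos i.isLt]
    nlinarith [hctm g]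
  -- tm at zero is at most one
  have ht0le1 : tm zK' ≤ 1 := by
    have h1 : (∑ h ∈ Hstar K, if P h = zK' then π h else 0) ≤ ∑ h ∈ Hstar K, π h := by
      refine Finset.sum_le_sum fun h _ => ?_
      split_ifs <;> [exact le_rfl; exact (hπ h).le]
    have h2 : ∑ h ∈ Hstar K, π h = 1 - p0 := by rw [hHK]; linarith
    nlinarith [hctm zK']
  -- positivity of products
  have hPo : 0 < pOdd (Hstar K') tm := by
    refine Finset.prod_pos fun g _ => ?_
    split_ifs <;> [exact htmpos g; exact one_pos]
  have hPe : 0 < pEven (Hstar K') tm := by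
    refine Finset.prod_pos fun g _ => ?_
    split_ifs <;> [exact htmpos g; exact one_pos]
  -- cardinalities
  set eE : ℕ := ((Hstar K').filter (fun g => Even (∑ k, (g k).toNat))).card with heE
  have hzmemE : zK' ∈ (univ : Finset (Fin K' → Bool)).filter (fun g => Even (∑ k, (g k).toNat)) := by
    simp [hzK']
  have haE : ((univ : Finset (Fin K' → Bool)).filter (fun g => Odd (∑ k, (g k).toNat))).card
      = eE + 1 := by
    have h3 : 1 ≤ ((univ : Finset (Fin K' → Bool)).filter
        (fun g => Even (∑ k, (g k).toNat))).card := Finset.card_pos.mpr ⟨_, hzmemE⟩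
    rw [card_odd_eq_card_even hK'0, heE, hHK', Finset.filter_erase,
      Finset.card_erase_of_mem hzmemE, Nat.sub_add_cancel h3]
  -- product decompositions
  have hfacO : ∀ s : Finset (Fin K' → Bool), zK' ∉ s →
      (∏ g ∈ s, if Odd (∑ k, (g k).toNat) then mfull g else 1)
        = (1-p0) ^ (s.filter (fun g => Odd (∑ k, (g k).toNat))).card
            * ∏ g ∈ s, if Odd (∑ k, (g k).toNat) then tm g else 1 := by
    intro s hzs
    calc (∏ g ∈ s, if Odd (∑ k, (g k).toNat) then mfull g else 1)
        = ∏ g ∈ s, ((if Odd (∑ k, (g k).toNat) then (1-p0) else 1)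
            * (if Odd (∑ k, (g k).toNat) then tm g else 1)) := by
          refine Finset.prod_congr rfl fun g hg => ?_
          rw [key1 g (fun hcon => hzs (hcon ▸ hg))]
          split_ifs <;> ring
      _ = (∏ g ∈ s, if Odd (∑ k, (g k).toNat) then (1-p0) else 1)
            * ∏ g ∈ s, if Odd (∑ k, (g k).toNat) then tm g else 1 :=
          Finset.prod_mul_distrib
      _ = _ := by rw [← Finset.prod_filter, Finset.prod_const]
  have hfacE : ∀ s : Finset (Fin K' → Bool), zK' ∉ s →
      (∏ g ∈ s, if Even (∑ k, (g k).toNat) then mfull g else 1)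
        = (1-p0) ^ (s.filter (fun g => Even (∑ k, (g k).toNat))).card
            * ∏ g ∈ s, if Even (∑ k, (g k).toNat) then tm g else 1 := by
    intro s hzs
    calc (∏ g ∈ s, if Even (∑ k, (g k).toNat) then mfull g else 1)
        = ∏ g ∈ s, ((if Even (∑ k, (g k).toNat) then (1-p0) else 1)
            * (if Even (∑ k, (g k).toNat) then tm g else 1)) := by
          refine Finset.prod_congr rfl fun g hg => ?_
          rw [key1 g (fun hcon => hzs (hcon ▸ hg))]
          split_ifs <;> ring
      _ = (∏ g ∈ s, if Even (∑ k, (g k).toNat) then (1-p0) else 1)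
            * ∏ g ∈ s, if Even (∑ k, (g k).toNat) then tm g else 1 :=
          Finset.prod_mul_distrib
      _ = _ := by rw [← Finset.prod_filter, Finset.prod_const]
  have hznots : zK' ∉ (univ : Finset (Fin K' → Bool)).erase zK' := Finset.notMem_erase _ _
  have hOddFull : pOdd (univ : Finset (Fin K' → Bool)) mfull
      = (1-p0) ^ (eE+1) * pOdd (Hstar K') tm := by
    show (∏ g : Fin K' → Bool, if Odd (∑ k, (g k).toNat) then mfull g else 1) = _
    rw [← Finset.prod_erase (univ : Finset (Fin K' → Bool))
        (show (if Odd (∑ k, (zK' k).toNat) then mfull zK' else 1) = 1 by simp [hzK']),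
      hfacO _ hznots, ← hHK']
    congr 1
    rw [hHK', Finset.filter_erase, Finset.erase_eq_of_notMem, haE]
    intro hcon
    simp [hzK'] at hcon
  have hEvenFull : pEven (univ : Finset (Fin K' → Bool)) mfull
      = (p0 + (1-p0) * tm zK') * ((1-p0) ^ eE * pEven (Hstar K') tm) := by
    show (∏ g : Fin K' → Bool, if Even (∑ k, (g k).toNat) then mfull g else 1) = _
    rw [← Finset.mul_prod_erase (univ : Finset (Fin K' → Bool)) _ (Finset.mem_univ zK'),
      hfacE _ hznots, ← hHK', ← heE]
    congr 1
    rw [if_pos (by simp [hzK'] : Even (∑ k, (zK' k).toNat)), key0]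
  -- final algebra
  set Po := pOdd (Hstar K') tm with hPodef
  set Pe := pEven (Hstar K') tm with hPedef
  set t0 := tm zK' with ht0def
  rw [hOddFull, hEvenFull]
  have hp0pos : 0 < p0 := hπ zK
  have hM0 : (0:ℝ) < p0 + (1-p0) * t0 := by nlinarith [htmpos zK']
  have hden : (0:ℝ) < (p0 + (1-p0) * t0) * ((1-p0)^eE * Pe) :=
    mul_pos hM0 (mul_pos (pow_pos hc _) hPe)
  have hD : 0 < ξ + (Po/Pe - ξ * t0) := by
    have hR : 0 < Po / Pe := div_pos hPo hPe
    nlinarith [mul_nonneg hξ.le (sub_nonneg.mpr ht0le1)]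
  rw [div_eq_iff hden.ne', eq_div_iff hD.ne']
  obtain ⟨R, hRPo⟩ : ∃ R, Po = R * Pe := ⟨Po / Pe, (div_mul_cancel₀ Po hPe.ne').symm⟩
  rw [hRPo, mul_div_cancel_right₀ R hPe.ne']
  constructor
  · intro h
    have h' : ((1-p0)*R) * ((1-p0)^eE * Pe) = (ξ*(p0 + (1-p0)*t0)) * ((1-p0)^eE * Pe) := by
      linear_combination h
    have h'' := mul_right_cancel₀ (mul_ne_zero (pow_ne_zero _ hc.ne') hPe.ne') h'
    linear_combination -h''
  · intro h
    linear_combination (-((1-p0)^eE * Pe)) * h
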